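/- arXiv:1902.10305 — 3 statements merged into one kernel-verified Lean document; each statement's English description precedes it below -/
import Mathlib

section
/- Suppose g : ℝ × ℝ → ℝ is differentiable and its partial derivatives with respect to the first and second variables agree everywhere: ∂g/∂l₁ = ∂g/∂l₂. Then g(l₁,l₂) = g(l₁+l₂, 0) for all l₁, l₂. -/
theorem eq_partial_deriv_imp_addition (g : ℝ × ℝ → ℝ)
    (hg : Differentiable ℝ g)
    (heq : ∀ p : ℝ × ℝ, fderiv ℝ g p (1, 0) = fderiv ℝ g p (0, 1)) :
    ∀ l₁ l₂ : ℝ, g (l₁, l₂) = g (l₁ + l₂, 0) := by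
  intro l₁ l₂
  set φ : ℝ → ℝ := fun t => g (l₁ + t, l₂ - t) with hφ
  have hder : ∀ t : ℝ, HasDerivAt φ 0 t := by
    intro t
    have hc : HasDerivAt (fun t : ℝ => ((l₁ + t, l₂ - t) : ℝ × ℝ)) (1, -1) t := by
      have h1 : HasDerivAt (fun t : ℝ => l₁ + t) 1 t :=
        (hasDerivAt_id t).const_add l₁
      have h2 : HasDerivAt (fun t : ℝ => l₂ - t) (-1) t :=
        ((hasDerivAt_id t).const_sub l₂).congr_deriv (by simp)
      exact h1.prodMk h2
    have hgd := (hg (l₁ + t, l₂ - t)).hasFDerivAt.comp_hasDerivAt t hc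
    have hval : fderiv ℝ g (l₁ + t, l₂ - t) (1, -1) = 0 := by
      have : ((1, -1) : ℝ × ℝ) = (1, 0) - (0, 1) := by simp [Prod.ext_iff]
      rw [this, map_sub, heq, sub_self]
    rwa [hval] at hgd
  have hconst : φ l₂ = φ 0 :=
    is_const_of_deriv_eq_zero (fun t => (hder t).differentiableAt)
      (fun t => (hder t).deriv) l₂ 0
  simpa [hφ] using hconst.symm
end

section
/- If u : ℝ → ℝ solves u'' = -2u³ with u(0)=1, u'(0)=0 (the function cleaf₂), and v : ℝ → ℝ solves v'' = 2v³ with v(0)=1, v'(0)=0 (the function cleafh₂), then u(l)·v(l) = 1 for all l in the intersection of their domains where both are defined and nonzero. -/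
open Set

lemma cleaf_lipschitz_field (R : ℝ) :
    LipschitzOnWith (Real.toNNReal (1 + 6 * R ^ 2))
      (fun p : ℝ × ℝ => (p.2, 2 * p.1 ^ 3)) (Metric.closedBall 0 R) := by
  rw [lipschitzOnWith_iff_dist_le_mul]
  intro p hp q hq
  have hp1 : |p.1| ≤ R := by
    have := Metric.mem_closedBall.mp hp
    rw [Prod.dist_eq] at this
    simpa using (le_max_left _ _).trans this
  have hq1 : |q.1| ≤ R := by
    have := Metric.mem_closedBall.mp hq
    rw [Prod.dist_eq] at this
    simpa using (le_max_left _ _).trans this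
  rw [Prod.dist_eq, Prod.dist_eq]
  have hK : Real.toNNReal (1 + 6 * R ^ 2) = (1 + 6 * R ^ 2 : ℝ) := by
    rw [Real.coe_toNNReal]; nlinarith [sq_abs p.1, abs_nonneg p.1]
  rw [hK]
  have hd1 : dist p.1 q.1 ≤ max (dist p.1 q.1) (dist p.2 q.2) := le_max_left _ _
  have hd2 : dist p.2 q.2 ≤ max (dist p.1 q.1) (dist p.2 q.2) := le_max_right _ _
  have hdnn : 0 ≤ max (dist p.1 q.1) (dist p.2 q.2) := le_trans dist_nonneg hd1
  have hRnn : (0:ℝ) ≤ 6 * R ^ 2 := by nlinarith [sq_abs p.1, abs_nonneg p.1]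
  apply max_le
  · nlinarith
  · have key : dist (2 * p.1 ^ 3) (2 * q.1 ^ 3) ≤ 6 * R ^ 2 * dist p.1 q.1 := by
      rw [Real.dist_eq, Real.dist_eq]
      have : 2 * p.1 ^ 3 - 2 * q.1 ^ 3 = (p.1 - q.1) * (2 * (p.1^2 + p.1*q.1 + q.1^2)) := by ring
      rw [this, abs_mul]
      have h2 : |2 * (p.1^2 + p.1*q.1 + q.1^2)| ≤ 6 * R ^ 2 := by
        have hp2 : p.1^2 ≤ R^2 := by nlinarith [sq_abs p.1, abs_nonneg p.1]
        have hq2 : q.1^2 ≤ R^2 := by nlinarith [sq_abs q.1, abs_nonneg q.1]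
        have habs : |p.1*q.1| ≤ R^2 := by
          rw [abs_mul, sq]
          exact mul_le_mul hp1 hq1 (abs_nonneg _) ((abs_nonneg _).trans hp1)
        rw [abs_le]
        constructor
        · nlinarith [neg_abs_le (p.1*q.1), sq_nonneg p.1, sq_nonneg q.1]
        · nlinarith [le_abs_self (p.1*q.1)]
      calc |p.1 - q.1| * |2 * (p.1^2 + p.1*q.1 + q.1^2)| ≤ |p.1 - q.1| * (6 * R^2) :=
            mul_le_mul_of_nonneg_left h2 (abs_nonneg _)
        _ = 6 * R^2 * |p.1 - q.1| := by ring
    calc dist (2 * p.1 ^ 3) (2 * q.1 ^ 3) ≤ 6 * R ^ 2 * dist p.1 q.1 := key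
      _ ≤ 6 * R ^ 2 * max (dist p.1 q.1) (dist p.2 q.2) := by
          exact mul_le_mul_of_nonneg_left hd1 hRnn
      _ ≤ (1 + 6 * R ^ 2) * max (dist p.1 q.1) (dist p.2 q.2) := by nlinarith

lemma cleaf_energy (α β : ℝ) (hα : α < 0) (hβ : 0 < β) (u u' : ℝ → ℝ)
    (hu : ∀ l ∈ Ioo α β, HasDerivAt u (u' l) l)
    (hu2 : ∀ l ∈ Ioo α β, HasDerivAt u' (-2 * u l ^ 3) l)
    (hu0 : u 0 = 1) (hu1 : u' 0 = 0) :
    ∀ l ∈ Ioo α β, u' l ^ 2 + u l ^ 4 = 1 := by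
  intro l hl
  set E : ℝ → ℝ := fun t => u' t ^ 2 + u t ^ 4 with hE
  have hE0 : E 0 = 1 := by simp [hE, hu0, hu1]
  have hEd : ∀ t ∈ Ioo α β, HasDerivAt E 0 t := by
    intro t ht
    have h1 := ((hu2 t ht).pow 2).add ((hu t ht).pow 4)
    refine HasDerivAt.congr_deriv h1 ?_
    ring
  have h0 : (0:ℝ) ∈ Ioo α β := ⟨hα, hβ⟩
  rcases le_or_gt 0 l with h | h
  · have := constant_of_has_deriv_right_zero (a := 0) (b := l)
      (f := E)
      (fun x hx => (hEd x ⟨lt_of_lt_of_le hα hx.1, lt_of_le_of_lt hx.2 hl.2⟩).continuousAt.continuousWithinAt)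
      (fun x hx => (hEd x ⟨lt_of_lt_of_le hα hx.1, lt_of_le_of_lt hx.2.le hl.2⟩).hasDerivWithinAt)
      l ⟨h, le_refl l⟩
    show E l = 1
    rw [this, hE0]
  · have := constant_of_has_deriv_right_zero (a := l) (b := 0)
      (f := E)
      (fun x hx => (hEd x ⟨lt_of_lt_of_le hl.1 hx.1, lt_of_le_of_lt hx.2 hβ⟩).continuousAt.continuousWithinAt)
      (fun x hx => (hEd x ⟨lt_of_lt_of_le hl.1 hx.1, lt_of_le_of_lt hx.2.le hβ⟩).hasDerivWithinAt)
      0 ⟨h.le, le_refl 0⟩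
    show E l = 1
    rw [← this, hE0]

lemma cleaf_key_unique (α β : ℝ) (hα : α < 0) (hβ : 0 < β) (u u' v v' : ℝ → ℝ)
    (hu : ∀ l ∈ Ioo α β, HasDerivAt u (u' l) l)
    (hu2 : ∀ l ∈ Ioo α β, HasDerivAt u' (-2 * u l ^ 3) l)
    (hune : ∀ l ∈ Ioo α β, u l ≠ 0)
    (hu0 : u 0 = 1) (hu1 : u' 0 = 0)
    (hv : ∀ l ∈ Ioo α β, HasDerivAt v (v' l) l)
    (hv2 : ∀ l ∈ Ioo α β, HasDerivAt v' (2 * v l ^ 3) l)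
    (hv0 : v 0 = 1) (hv1 : v' 0 = 0) :
    ∀ l ∈ Ioo α β, v l = (u l)⁻¹ := by
  have energy := cleaf_energy α β hα hβ u u' hu hu2 hu0 hu1
  set f : ℝ → ℝ × ℝ := fun t => (v t, v' t) with hf
  set g : ℝ → ℝ × ℝ := fun t => ((u t)⁻¹, -(u' t) / (u t) ^ 2) with hg
  set F : ℝ → ℝ × ℝ → ℝ × ℝ := fun _ p => (p.2, 2 * p.1 ^ 3) with hF
  -- derivative facts on Ioo α β
  have hfd : ∀ t ∈ Ioo α β, HasDerivAt f (F t (f t)) t := by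
    intro t ht
    exact (hv t ht).prodMk (hv2 t ht)
  have hgd : ∀ t ∈ Ioo α β, HasDerivAt g (F t (g t)) t := by
    intro t ht
    have hne := hune t ht
    have h1 : HasDerivAt (fun s => (u s)⁻¹) (-(u' t) / (u t) ^ 2) t := (hu t ht).inv hne
    have hsq : HasDerivAt (fun s => (u s) ^ 2) (2 * u t * u' t) t := by
      have := (hu t ht).pow 2
      refine HasDerivAt.congr_deriv this ?_; ring
    have hsqne : (u t) ^ 2 ≠ 0 := pow_ne_zero 2 hne
    have h2 : HasDerivAt (fun s => -(u' s) / (u s) ^ 2)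
        ((-(-2 * u t ^ 3) * (u t)^2 - (-(u' t)) * (2 * u t * u' t)) / ((u t)^2)^2) t :=
      ((hu2 t ht).neg).div hsq hsqne
    have heq : (-(-2 * u t ^ 3) * (u t)^2 - (-(u' t)) * (2 * u t * u' t)) / ((u t)^2)^2
        = 2 * ((u t)⁻¹) ^ 3 := by
      have hE := energy t ht
      have h4 : u t ^ 4 = 1 - u' t ^ 2 := by linarith
      field_simp
      nlinarith [hE]
    rw [heq] at h2
    exact h1.prodMk h2
  intro l hl
  -- choose a compact subinterval
  set α' : ℝ := (α + min 0 l) / 2 with hα'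
  set β' : ℝ := (β + max 0 l) / 2 with hβ'
  have hαα' : α < α' := by
    have : min 0 l > α := lt_min (by linarith) hl.1
    simp only [hα']; linarith
  have hα'0 : α' < min 0 l := by
    have : min 0 l > α := lt_min (by linarith) hl.1
    simp only [hα']; linarith
  have hβ'0 : max 0 l < β' := by
    have : max 0 l < β := max_lt (by linarith) hl.2
    simp only [hβ']; linarith
  have hβ'β : β' < β := by
    have : max 0 l < β := max_lt (by linarith) hl.2
    simp only [hβ']; linarith
  have hsub : Ioo α' β' ⊆ Ioo α β := Ioo_subset_Ioo hαα'.le hβ'β.le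
  have h0mem : (0:ℝ) ∈ Ioo α' β' :=
    ⟨lt_of_lt_of_le hα'0 (min_le_left _ _), lt_of_le_of_lt (le_max_left _ _) hβ'0⟩
  have hlmem : l ∈ Ioo α' β' :=
    ⟨lt_of_lt_of_le hα'0 (min_le_right _ _), lt_of_le_of_lt (le_max_right _ _) hβ'0⟩
  -- bound both trajectories on the compact interval
  have hcomp : IsCompact (Icc α' β') := isCompact_Icc
  have hIccsub : Icc α' β' ⊆ Ioo α β := fun x hx =>
    ⟨lt_of_lt_of_le hαα' hx.1, lt_of_le_of_lt hx.2 hβ'β⟩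
  have hfc : ContinuousOn f (Icc α' β') := fun x hx =>
    ((hfd x (hIccsub hx)).continuousAt).continuousWithinAt
  have hgc : ContinuousOn g (Icc α' β') := fun x hx =>
    ((hgd x (hIccsub hx)).continuousAt).continuousWithinAt
  obtain ⟨R₁, hR₁⟩ := hcomp.exists_bound_of_continuousOn hfc
  obtain ⟨R₂, hR₂⟩ := hcomp.exists_bound_of_continuousOn hgc
  set R : ℝ := max R₁ R₂ with hR
  have hfs : ∀ t ∈ Ioo α' β', f t ∈ Metric.closedBall (0 : ℝ × ℝ) R := by
    intro t ht
    rw [Metric.mem_closedBall, dist_zero_right]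
    exact le_trans (hR₁ t (Ioo_subset_Icc_self ht)) (le_max_left _ _)
  have hgs : ∀ t ∈ Ioo α' β', g t ∈ Metric.closedBall (0 : ℝ × ℝ) R := by
    intro t ht
    rw [Metric.mem_closedBall, dist_zero_right]
    exact le_trans (hR₂ t (Ioo_subset_Icc_self ht)) (le_max_right _ _)
  have heq0 : f 0 = g 0 := by
    simp only [hf, hg, hv0, hv1, hu0, hu1]
    norm_num
  have huniq := ODE_solution_unique_of_mem_Ioo
    (v := F) (s := fun _ => Metric.closedBall (0 : ℝ × ℝ) R) (K := Real.toNNReal (1 + 6 * R ^ 2))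
    (fun _ _ => cleaf_lipschitz_field R) h0mem
    (fun t ht => ⟨hfd t (hsub ht), hfs t ht⟩)
    (fun t ht => ⟨hgd t (hsub ht), hgs t ht⟩) heq0
  have := congrArg Prod.fst (huniq hlmem)
  simpa [hf, hg] using this

lemma cleaf_nz_pos (α β : ℝ) (hα : α < 0) (hβ : 0 < β) (u u' v v' : ℝ → ℝ)
    (hu : ∀ l ∈ Ioo α β, HasDerivAt u (u' l) l)
    (hu2 : ∀ l ∈ Ioo α β, HasDerivAt u' (-2 * u l ^ 3) l)
    (hu0 : u 0 = 1) (hu1 : u' 0 = 0)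
    (hv : ∀ l ∈ Ioo α β, HasDerivAt v (v' l) l)
    (hv2 : ∀ l ∈ Ioo α β, HasDerivAt v' (2 * v l ^ 3) l)
    (hv0 : v 0 = 1) (hv1 : v' 0 = 0) :
    ∀ t ∈ Ioo α β, 0 ≤ t → u t ≠ 0 := by
  intro t ht ht0 hzero
  have h0mem : (0:ℝ) ∈ Ioo α β := ⟨hα, hβ⟩
  set S : Set ℝ := {s | s ∈ Icc 0 t ∧ u s = 0} with hS
  have hSne : S.Nonempty := ⟨t, ⟨ht0, le_refl t⟩, hzero⟩
  have hSbdd : BddBelow S := ⟨0, fun s hs => hs.1.1⟩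
  set t₀ : ℝ := sInf S with ht₀def
  have hIccsub : Icc 0 t ⊆ Ioo α β := fun x hx =>
    ⟨lt_of_lt_of_le hα hx.1, lt_of_le_of_lt hx.2 ht.2⟩
  have ht₀cl : t₀ ∈ closure S := csInf_mem_closure hSne hSbdd
  have hSIcc : S ⊆ Icc 0 t := fun s hs => hs.1
  have ht₀Icc : t₀ ∈ Icc 0 t :=
    (closure_minimal hSIcc isClosed_Icc) ht₀cl
  have ht₀mem : t₀ ∈ Ioo α β := hIccsub ht₀Icc
  have ht₀0 : u t₀ = 0 := by
    obtain ⟨x, hx, hxt⟩ := mem_closure_iff_seq_limit.mp ht₀cl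
    have hcont : ContinuousAt u t₀ := (hu t₀ ht₀mem).continuousAt
    have : Filter.Tendsto (fun n => u (x n)) Filter.atTop (nhds (u t₀)) :=
      (hcont.tendsto).comp hxt
    have hzeros : (fun n => u (x n)) = fun _ => (0:ℝ) := funext fun n => (hx n).2
    rw [hzeros] at this
    exact tendsto_nhds_unique this tendsto_const_nhds
  have ht₀pos : 0 < t₀ := by
    rcases lt_or_eq_of_le ht₀Icc.1 with h | h
    · exact h
    · exfalso; rw [← h] at ht₀0; rw [hu0] at ht₀0; norm_num at ht₀0
  have hmin : ∀ s, 0 ≤ s → s < t₀ → u s ≠ 0 := by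
    intro s hs0 hst hs
    have hsS : s ∈ S := ⟨⟨hs0, le_trans hst.le ht₀Icc.2⟩, hs⟩
    exact absurd (csInf_le hSbdd hsS) (not_le.mpr hst)
  -- neighborhood of 0 where u ≠ 0
  have hev : ∀ᶠ x in nhds (0:ℝ), u x ≠ 0 :=
    (hu 0 h0mem).continuousAt.eventually_ne (by rw [hu0]; norm_num)
  obtain ⟨δ, hδpos, hδ⟩ := Metric.eventually_nhds_iff.mp hev
  set ε : ℝ := min (δ/2) (-α/2) with hε
  have hεpos : 0 < ε := lt_min (by linarith) (by linarith)
  have hεδ : ε < δ := lt_of_le_of_lt (min_le_left _ _) (by linarith)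
  have hεα : α < -ε := by
    have : ε ≤ -α/2 := min_le_right _ _
    linarith
  have hJsub : Ioo (-ε) t₀ ⊆ Ioo α β := fun x hx =>
    ⟨lt_of_lt_of_le hεα hx.1.le, lt_of_lt_of_le hx.2 (le_trans ht₀Icc.2 ht.2.le)⟩
  have hJne : ∀ x ∈ Ioo (-ε) t₀, u x ≠ 0 := by
    intro x hx
    rcases le_or_gt 0 x with h | h
    · exact hmin x h hx.2
    · apply hδ
      rw [Real.dist_eq, sub_zero, abs_of_neg h]
      linarith [hx.1]
  have hveq := cleaf_key_unique (-ε) t₀ (by linarith) ht₀pos u u' v v'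
    (fun x hx => hu x (hJsub hx)) (fun x hx => hu2 x (hJsub hx)) hJne hu0 hu1
    (fun x hx => hv x (hJsub hx)) (fun x hx => hv2 x (hJsub hx)) hv0 hv1
  -- contradiction via continuity at t₀
  have hclos : t₀ ∈ closure (Ioo 0 t₀) := by
    rw [closure_Ioo (ne_of_lt ht₀pos)]
    exact ⟨ht₀pos.le, le_refl _⟩
  have hne : (nhdsWithin t₀ (Ioo 0 t₀)).NeBot := mem_closure_iff_nhdsWithin_neBot.mp hclos
  have hlim1 : Filter.Tendsto (fun s => u s * v s) (nhdsWithin t₀ (Ioo 0 t₀))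
      (nhds (u t₀ * v t₀)) :=
    (((hu t₀ ht₀mem).continuousAt.mul (hv t₀ ht₀mem).continuousAt).tendsto).mono_left
      nhdsWithin_le_nhds
  have hone : ∀ s ∈ Ioo 0 t₀, u s * v s = 1 := by
    intro s hs
    have hsJ : s ∈ Ioo (-ε) t₀ := ⟨lt_trans (by linarith) hs.1, hs.2⟩
    rw [hveq s hsJ]
    exact mul_inv_cancel₀ (hJne s hsJ)
  have hlim2 : Filter.Tendsto (fun s => u s * v s) (nhdsWithin t₀ (Ioo 0 t₀)) (nhds 1) := by
    apply Filter.Tendsto.congr' _ tendsto_const_nhds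
    filter_upwards [self_mem_nhdsWithin] with s hs
    exact (hone s hs).symm
  have : u t₀ * v t₀ = 1 := tendsto_nhds_unique hlim1 hlim2
  rw [ht₀0, zero_mul] at this
  norm_num at this

theorem cleaf_cleafh_product (a b c d : ℝ) (ha : a < 0) (hb : 0 < b) (hc : c < 0) (hd : 0 < d)
    (u u' v v' : ℝ → ℝ)
    (hu : ∀ l ∈ Set.Ioo a b, HasDerivAt u (u' l) l)
    (hu2 : ∀ l ∈ Set.Ioo a b, HasDerivAt u' (-2 * u l ^ 3) l)
    (hu0 : u 0 = 1) (hu1 : u' 0 = 0)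
    (hv : ∀ l ∈ Set.Ioo c d, HasDerivAt v (v' l) l)
    (hv2 : ∀ l ∈ Set.Ioo c d, HasDerivAt v' (2 * v l ^ 3) l)
    (hv0 : v 0 = 1) (hv1 : v' 0 = 0) :
    ∀ l ∈ Set.Ioo a b ∩ Set.Ioo c d, u l ≠ 0 → v l ≠ 0 → u l * v l = 1 := by
  intro l hl _ _
  set α : ℝ := max a c with hαdef
  set β : ℝ := min b d with hβdef
  have hα : α < 0 := max_lt ha hc
  have hβ : 0 < β := lt_min hb hd
  have hsub1 : Ioo α β ⊆ Ioo a b := Ioo_subset_Ioo (le_max_left _ _) (min_le_left _ _)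
  have hsub2 : Ioo α β ⊆ Ioo c d := Ioo_subset_Ioo (le_max_right _ _) (min_le_right _ _)
  have hlmem : l ∈ Ioo α β := by
    rw [Set.Ioo_inter_Ioo] at hl
    exact hl
  have hu' : ∀ x ∈ Ioo α β, HasDerivAt u (u' x) x := fun x hx => hu x (hsub1 hx)
  have hu2' : ∀ x ∈ Ioo α β, HasDerivAt u' (-2 * u x ^ 3) x := fun x hx => hu2 x (hsub1 hx)
  have hv' : ∀ x ∈ Ioo α β, HasDerivAt v (v' x) x := fun x hx => hv x (hsub2 hx)
  have hv2' : ∀ x ∈ Ioo α β, HasDerivAt v' (2 * v x ^ 3) x := fun x hx => hv2 x (hsub2 hx)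
  -- reflected functions
  set U : ℝ → ℝ := fun s => u (-s) with hU
  set U' : ℝ → ℝ := fun s => -(u' (-s)) with hU'
  set V : ℝ → ℝ := fun s => v (-s) with hV
  set V' : ℝ → ℝ := fun s => -(v' (-s)) with hV'
  have hrefl : ∀ s, s ∈ Ioo (-β) (-α) → (-s) ∈ Ioo α β := by
    intro s hs
    exact ⟨by linarith [hs.2], by linarith [hs.1]⟩
  have hUd : ∀ s ∈ Ioo (-β) (-α), HasDerivAt U (U' s) s := by
    intro s hs
    have := (hu' (-s) (hrefl s hs)).comp s (hasDerivAt_neg s)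
    refine HasDerivAt.congr_deriv this ?_
    simp [hU']
  have hUd2 : ∀ s ∈ Ioo (-β) (-α), HasDerivAt U' (-2 * U s ^ 3) s := by
    intro s hs
    have := ((hu2' (-s) (hrefl s hs)).comp s (hasDerivAt_neg s)).neg
    refine HasDerivAt.congr_deriv this ?_
    simp [hU]
  have hVd : ∀ s ∈ Ioo (-β) (-α), HasDerivAt V (V' s) s := by
    intro s hs
    have := (hv' (-s) (hrefl s hs)).comp s (hasDerivAt_neg s)
    refine HasDerivAt.congr_deriv this ?_
    simp [hV']
  have hVd2 : ∀ s ∈ Ioo (-β) (-α), HasDerivAt V' (2 * V s ^ 3) s := by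
    intro s hs
    have := ((hv2' (-s) (hrefl s hs)).comp s (hasDerivAt_neg s)).neg
    refine HasDerivAt.congr_deriv this ?_
    simp [hV]
  have hU0 : U 0 = 1 := by simp [hU, hu0]
  have hU1 : U' 0 = 0 := by simp [hU', hu1]
  have hV0 : V 0 = 1 := by simp [hV, hv0]
  have hV1 : V' 0 = 0 := by simp [hV', hv1]
  -- u never vanishes on Ioo α β
  have hune : ∀ x ∈ Ioo α β, u x ≠ 0 := by
    intro x hx
    rcases le_or_gt 0 x with h | h
    · exact cleaf_nz_pos α β hα hβ u u' v v' hu' hu2' hu0 hu1 hv' hv2' hv0 hv1 x hx h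
    · have hxr : -x ∈ Ioo (-β) (-α) := ⟨by linarith [hx.2], by linarith [hx.1]⟩
      have := cleaf_nz_pos (-β) (-α) (by linarith) (by linarith) U U' V V'
        hUd hUd2 hU0 hU1 hVd hVd2 hV0 hV1 (-x) hxr (by linarith)
      simpa [hU] using this
  have hveq := cleaf_key_unique α β hα hβ u u' v v' hu' hu2' hune hu0 hu1 hv' hv2' hv0 hv1
  rw [hveq l hlmem]
  exact mul_inv_cancel₀ (hune l hlmem)
end

section
/- Euler's addition formula for the lemniscatic integral: if u, v ∈ [0,1] with 1 + u²v² ≠ 0 and r := (u·sqrt(1-v⁴) + v·sqrt(1-u⁴))/(1 + u²v²) satisfies 0 ≤ r ≤ 1, then ∫_0^r dt/sqrt(1-t⁴) = ∫_0^u dt/sqrt(1-t⁴) + ∫_0^v dt/sqrt(1-t⁴). -/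
open Set MeasureTheory intervalIntegral

namespace EulerLemn

noncomputable def f (t : ℝ) : ℝ := 1 / Real.sqrt (1 - t ^ 4)

noncomputable def F (x : ℝ) : ℝ := ∫ t in (0:ℝ)..x, f t

lemma f_nonneg (t : ℝ) : 0 ≤ f t := by
  unfold f; positivity

lemma f_meas : Measurable f := by
  unfold f
  exact measurable_const.div ((Real.continuous_sqrt.comp (by continuity)).measurable)

lemma f_contAt {x : ℝ} (hx : x ^ 4 < 1) : ContinuousAt f x := by
  have h : Real.sqrt (1 - x ^ 4) ≠ 0 :=
    ne_of_gt (Real.sqrt_pos.mpr (by linarith))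
  exact ContinuousAt.div continuousAt_const
    ((Real.continuous_sqrt.comp (by continuity)).continuousAt) h

lemma pow4_lt_one {x : ℝ} (h0 : 0 ≤ x) (h1 : x < 1) : x ^ 4 < 1 :=
  pow_lt_one₀ h0 h1 (by norm_num)

lemma f_pos {x : ℝ} (h0 : 0 ≤ x) (h1 : x < 1) : 0 < f x := by
  unfold f
  have : 0 < 1 - x ^ 4 := by nlinarith [pow4_lt_one h0 h1]
  positivity

lemma f_int01 : IntervalIntegrable f volume 0 1 := by
  have hg : IntervalIntegrable (fun t : ℝ => (1 - t) ^ (-(1/2) : ℝ)) volume 0 1 := by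
    have := ((intervalIntegral.intervalIntegrable_rpow' (a := 0) (b := 1)
      (r := (-(1/2) : ℝ)) (by norm_num)).comp_sub_left 1).symm
    simpa using this
  refine hg.mono_fun' (f_meas.aestronglyMeasurable) ?_
  rw [Filter.EventuallyLE, ae_restrict_iff' measurableSet_uIoc]
  filter_upwards with t ht
  rw [Set.uIoc_of_le (by norm_num : (0:ℝ) ≤ 1)] at ht
  obtain ⟨ht0, ht1⟩ := ht
  have h1t : 0 ≤ 1 - t := by linarith
  have hle : 1 - t ≤ 1 - t ^ 4 := by
    nlinarith [mul_nonneg (mul_nonneg ht0.le h1t)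
      (by nlinarith [sq_nonneg t] : (0:ℝ) ≤ 1 + t + t ^ 2)]
  have hrw : (1 - t) ^ (-(1/2) : ℝ) = (Real.sqrt (1 - t))⁻¹ := by
    rw [Real.sqrt_eq_rpow, ← Real.rpow_neg h1t]
  rw [Real.norm_of_nonneg (f_nonneg t), hrw]
  unfold f
  rcases eq_or_lt_of_le ht1 with h | h
  · subst h
    simp
  · have hp : 0 < Real.sqrt (1 - t) := Real.sqrt_pos.mpr (by linarith)
    rw [one_div]
    exact inv_anti₀ hp (Real.sqrt_le_sqrt hle)

lemma f_int {x : ℝ} (hx1 : -1 < x) (hx2 : x ≤ 1) : IntervalIntegrable f volume 0 x := by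
  rcases le_or_gt 0 x with h | h
  · exact f_int01.mono_set' (by
      rw [Set.uIoc_of_le h, Set.uIoc_of_le (by norm_num : (0:ℝ) ≤ 1)]
      exact Set.Ioc_subset_Ioc le_rfl hx2)
  · refine ContinuousOn.intervalIntegrable ?_
    intro t ht
    rw [Set.uIcc_of_ge h.le] at ht
    refine (f_contAt ?_).continuousWithinAt
    have h1 : -1 < t := lt_of_lt_of_le hx1 ht.1
    have h2 : t < 1 := lt_of_le_of_lt ht.2 (by norm_num)
    rcases le_or_gt 0 t with h' | h'
    · exact pow4_lt_one h' h2
    · calc t ^ 4 = (-t) ^ 4 := by ring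
        _ < 1 := pow4_lt_one (by linarith) (by linarith)

lemma F_hasDeriv {x : ℝ} (hx1 : -1 < x) (hx2 : x < 1) : HasDerivAt F (f x) x := by
  have hc : ContinuousAt f x := by
    refine f_contAt ?_
    rcases le_or_gt 0 x with h' | h'
    · exact pow4_lt_one h' hx2
    · calc x ^ 4 = (-x) ^ 4 := by ring
        _ < 1 := pow4_lt_one (by linarith) (by linarith)
  exact intervalIntegral.integral_hasDerivAt_right (f_int hx1 hx2.le)
    (f_meas.aestronglyMeasurable.stronglyMeasurableAtFilter) hc

lemma F_contOn : ContinuousOn F (Icc 0 1) := by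
  have : IntegrableOn f (uIcc 0 1) volume := by
    rw [Set.uIcc_of_le (by norm_num : (0:ℝ) ≤ 1)]
    rw [integrableOn_Icc_iff_integrableOn_Ioc]
    exact (intervalIntegrable_iff_integrableOn_Ioc_of_le (by norm_num)).mp f_int01
  show ContinuousOn (fun x => ∫ t in (0:ℝ)..x, f t) (Icc 0 1)
  simpa [Set.uIcc_of_le (by norm_num : (0:ℝ) ≤ 1)] using
    intervalIntegral.continuousOn_primitive_interval (a := 0) (b := 1) this

lemma F_strictMono {x y : ℝ} (hx : 0 ≤ x) (hxy : x < y) (hy : y ≤ 1) : F x < F y := by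
  have hix : IntervalIntegrable f volume 0 x := f_int (by linarith) (by linarith)
  have hixy : IntervalIntegrable f volume x y :=
    f_int01.mono_set' (by
      rw [Set.uIoc_of_le hxy.le, Set.uIoc_of_le (by norm_num : (0:ℝ) ≤ 1)]
      exact Set.Ioc_subset_Ioc hx hy)
  have hadd : F x + (∫ t in x..y, f t) = F y :=
    intervalIntegral.integral_add_adjacent_intervals hix hixy
  have hpos : 0 < ∫ t in x..y, f t := by
    refine intervalIntegral.intervalIntegral_pos_of_pos_on hixy ?_ hxy
    intro t ht
    exact f_pos (le_trans hx ht.1.le) (lt_of_lt_of_le ht.2 hy)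
  linarith

lemma F_zero : F 0 = 0 := intervalIntegral.integral_same

lemma key_ident {s v A B : ℝ} (hA : A ^ 2 = 1 - s ^ 4) (hB : B ^ 2 = 1 - v ^ 4) :
    (1 + s^2*v^2)^4 - (s*B + v*A)^4
      = (A*B*(1 - s^2*v^2) - 2*s*v*(s^2 + v^2))^2 := by
  linear_combination (-B^2 - v^4 - v^4*A^2 - 4*s*v^3*A*B - 4*s^2*v^2*B^2 + s^4*v^4
      - s^4*v^4*B^2) * hA
    + (-1 - 4*s^2*v^2 - 4*s^3*v*A*B - s^4*B^2 + 4*s^6*v^2 + s^8*v^4) * hB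

lemma PS_ident {s v A B : ℝ} (hA : A ^ 2 = 1 - s ^ 4) (hB : B ^ 2 = 1 - v ^ 4) :
    (A*B*(1-s^2*v^2) - 2*s*v*(s^2+v^2)) * (A*B*(1-s^2*v^2) + 2*s*v*(s^2+v^2))
      = (1 - s^2 - v^2 - s^2*v^2) *
        ((1+s^2)*(1+v^2) + 2*s^2*v^2*(s^2+v^2) + s^4*v^4*(s^2+v^2-1-s^2*v^2)) := by
  linear_combination (B^2*(1-s^2*v^2)^2) * hA + ((1-s^4)*(1-s^2*v^2)^2) * hB

lemma H_pos {x y : ℝ} (hx0 : 0 ≤ x) (hx1 : x < 1) (hy0 : 0 ≤ y) (hy1 : y < 1) :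
    0 < (1+x)*(1+y) + 2*x*y*(x+y) + x^2*y^2*(x+y-1-x*y) := by
  have h1 : x*y < 1 := by nlinarith
  have h2 : x^2*y^2 ≤ x*y := by nlinarith [mul_nonneg hx0 hy0]
  have h3 : 0 ≤ (1-x)*(1-y) := by nlinarith
  have h4 : (1-x)*(1-y) ≤ 1 := by nlinarith [mul_nonneg hx0 hy0]
  nlinarith [mul_nonneg (mul_nonneg hx0 hy0) (add_nonneg hx0 hy0),
    mul_nonneg (mul_nonneg (sq_nonneg x) (sq_nonneg y)) h3,
    mul_le_of_le_one_right (le_trans (by positivity) h2 : (0:ℝ) ≤ x*y) h4]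

lemma P_pos {s v : ℝ} (hs0 : 0 ≤ s) (hv0 : 0 ≤ v) (hlt : s^2+v^2+s^2*v^2 < 1) :
    0 < Real.sqrt (1-s^4) * Real.sqrt (1-v^4) * (1-s^2*v^2) - 2*s*v*(s^2+v^2) := by
  have hs1 : s < 1 := by nlinarith
  have hv1 : v < 1 := by nlinarith
  have hs4 : (0:ℝ) < 1 - s^4 := by nlinarith [pow_lt_one₀ hs0 hs1 (by norm_num : 4 ≠ 0)]
  have hv4 : (0:ℝ) < 1 - v^4 := by nlinarith [pow_lt_one₀ hv0 hv1 (by norm_num : 4 ≠ 0)]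
  set A := Real.sqrt (1-s^4) with hAdef
  set B := Real.sqrt (1-v^4) with hBdef
  have hA2 : A ^ 2 = 1 - s^4 := Real.sq_sqrt hs4.le
  have hB2 : B ^ 2 = 1 - v^4 := Real.sq_sqrt hv4.le
  have hApos : 0 < A := Real.sqrt_pos.mpr hs4
  have hBpos : 0 < B := Real.sqrt_pos.mpr hv4
  have hsv : s^2*v^2 < 1 := by nlinarith [sq_nonneg s, sq_nonneg v]
  have hSpos : 0 < A*B*(1-s^2*v^2) + 2*s*v*(s^2+v^2) := by
    have : 0 < A*B*(1-s^2*v^2) := mul_pos (mul_pos hApos hBpos) (by linarith)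
    nlinarith [mul_nonneg (mul_nonneg hs0 hv0) (add_nonneg (sq_nonneg s) (sq_nonneg v))]
  have hQ : 0 < (1 - s^2 - v^2 - s^2*v^2) *
      ((1+s^2)*(1+v^2) + 2*s^2*v^2*(s^2+v^2) + s^4*v^4*(s^2+v^2-1-s^2*v^2)) := by
    refine mul_pos (by linarith) ?_
    have := H_pos (x := s^2) (y := v^2) (sq_nonneg s) (by nlinarith) (sq_nonneg v)
      (by nlinarith)
    refine lt_of_lt_of_eq this ?_
    ring
  rw [← PS_ident hA2 hB2] at hQ
  rcases mul_pos_iff.mp hQ with ⟨h, _⟩ | ⟨_, h⟩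
  · exact h
  · linarith

lemma r_mem {s v : ℝ} (hs : s ∈ Icc (0:ℝ) 1) (hv : v ∈ Icc (0:ℝ) 1) :
    (s*Real.sqrt (1-v^4) + v*Real.sqrt (1-s^4))/(1+s^2*v^2) ∈ Icc (0:ℝ) 1 := by
  obtain ⟨hs0, hs1⟩ := hs
  obtain ⟨hv0, hv1⟩ := hv
  have hs4 : (0:ℝ) ≤ 1 - s^4 := by nlinarith [pow_le_one₀ hs0 hs1 (n := 4)]
  have hv4 : (0:ℝ) ≤ 1 - v^4 := by nlinarith [pow_le_one₀ hv0 hv1 (n := 4)]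
  set A := Real.sqrt (1-s^4) with hAdef
  set B := Real.sqrt (1-v^4) with hBdef
  have hA2 : A ^ 2 = 1 - s^4 := Real.sq_sqrt hs4
  have hB2 : B ^ 2 = 1 - v^4 := Real.sq_sqrt hv4
  have hA0 : 0 ≤ A := Real.sqrt_nonneg _
  have hB0 : 0 ≤ B := Real.sqrt_nonneg _
  have hD : (0:ℝ) < 1 + s^2*v^2 := by positivity
  have hnum : 0 ≤ s*B + v*A := by positivity
  constructor
  · positivity
  · rw [div_le_one hD]
    have h4 : (s*B + v*A)^4 ≤ (1 + s^2*v^2)^4 := by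
      nlinarith [key_ident hA2 hB2, sq_nonneg (A*B*(1 - s^2*v^2) - 2*s*v*(s^2 + v^2))]
    exact le_of_pow_le_pow_left₀ (by norm_num) hD.le h4

lemma core {u v : ℝ} (hu0 : 0 ≤ u) (hv0 : 0 ≤ v)
    (hlt : u^2+v^2+u^2*v^2 < 1) :
    F ((u*Real.sqrt (1-v^4) + v*Real.sqrt (1-u^4))/(1+u^2*v^2)) = F u + F v := by
  have hv1 : v < 1 := by nlinarith
  have hv4 : (0:ℝ) < 1 - v^4 := by nlinarith [pow_lt_one₀ hv0 hv1 (by norm_num : 4 ≠ 0)]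
  set B := Real.sqrt (1-v^4) with hBdef
  have hB2 : B ^ 2 = 1 - v^4 := Real.sq_sqrt hv4.le
  have hBpos : 0 < B := Real.sqrt_pos.mpr hv4
  set ρ : ℝ → ℝ := fun x => (x*B + v*Real.sqrt (1-x^4))/(1+x^2*v^2) with hρdef
  have hderiv : ∀ s ∈ Icc (0:ℝ) u, HasDerivAt (fun x => F (ρ x) - F x) 0 s := by
    rintro s ⟨hs0, hsu⟩
    have hslt : s^2+v^2+s^2*v^2 < 1 := by nlinarith
    have hs1 : s < 1 := by nlinarith
    have hs4 : (0:ℝ) < 1 - s^4 := by nlinarith [pow_lt_one₀ hs0 hs1 (by norm_num : 4 ≠ 0)]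
    set A := Real.sqrt (1-s^4) with hAdef
    have hA2 : A ^ 2 = 1 - s^4 := Real.sq_sqrt hs4.le
    have hApos : 0 < A := Real.sqrt_pos.mpr hs4
    have hD : (0:ℝ) < 1 + s^2*v^2 := by positivity
    set P : ℝ := A*B*(1-s^2*v^2) - 2*s*v*(s^2+v^2) with hPdef
    have hP : 0 < P := P_pos hs0 hv0 hslt
    have hinner : HasDerivAt (fun x : ℝ => 1 - x^4) (-(4*s^3)) s := by
      simpa using (hasDerivAt_pow 4 s).const_sub 1
    have hsqrtA : HasDerivAt (fun x : ℝ => Real.sqrt (1 - x^4))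
        (1/(2*A) * (-(4*s^3))) s := by
      exact (Real.hasDerivAt_sqrt (ne_of_gt hs4)).comp s hinner
    have hnum : HasDerivAt (fun x : ℝ => x*B + v*Real.sqrt (1-x^4))
        (B + v*(1/(2*A) * (-(4*s^3)))) s := by
      refine (((hasDerivAt_id s).mul_const B).add (hsqrtA.const_mul v)).congr_deriv ?_
      simp
    have hden : HasDerivAt (fun x : ℝ => 1 + x^2*v^2) (2*s*v^2) s := by
      have := ((hasDerivAt_pow 2 s).mul_const (v^2)).const_add 1
      simpa using this
    have hρs : HasDerivAt ρ (P/(A*(1+s^2*v^2)^2)) s := by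
      have h := hnum.div hden (ne_of_gt hD)
      refine h.congr_deriv ?_
      symm
      rw [hPdef]
      field_simp
      rw [← hAdef]
      linear_combination (4*s*v^3) * hA2
    set r : ℝ := ρ s with hrdef
    have hr0 : 0 ≤ r := by
      rw [hrdef, hρdef]
      positivity
    have hr4 : 1 - r^4 = (P/(1+s^2*v^2)^2)^2 := by
      rw [hrdef, hρdef, hPdef]
      field_simp
      rw [← hAdef]
      linear_combination key_ident hA2 hB2
    have hr1 : r < 1 := by
      have h14 : 0 < 1 - r^4 := by
        rw [hr4]
        exact pow_pos (div_pos hP (by positivity)) 2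
      by_contra h
      push_neg at h
      nlinarith [one_le_pow₀ (n := 4) h]
    have hsqrtr : Real.sqrt (1 - r^4) = P/(1+s^2*v^2)^2 := by
      rw [hr4]
      exact Real.sqrt_sq (by positivity)
    have hFr : HasDerivAt F (f r) r := F_hasDeriv (by linarith) hr1
    have hcomp : HasDerivAt (fun x => F (ρ x)) (f r * (P/(A*(1+s^2*v^2)^2))) s :=
      HasDerivAt.comp (h₂ := F) s hFr hρs
    have hFs : HasDerivAt F (f s) s := F_hasDeriv (by linarith) hs1
    have hval : f r * (P/(A*(1+s^2*v^2)^2)) - f s = 0 := by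
      unfold f
      rw [hsqrtr, ← hAdef]
      field_simp
      ring
    exact (hcomp.sub hFs).congr_deriv hval
  have hcont : ContinuousOn (fun x => F (ρ x) - F x) (Icc 0 u) :=
    fun x hx => (hderiv x hx).continuousAt.continuousWithinAt
  have hconst := constant_of_has_deriv_right_zero hcont
    (fun x hx => (hderiv x (Ico_subset_Icc_self hx)).hasDerivWithinAt)
  have hu' := hconst u (right_mem_Icc.mpr hu0)
  have hρ0 : ρ 0 = v := by
    rw [hρdef]
    norm_num
  rw [hρ0, F_zero] at hu'
  have : F (ρ u) = F v + F u := by linarith [hu']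
  rw [hρdef] at this
  simp only [] at this
  rw [this]
  ring

lemma addn {u v : ℝ} (hu : u ∈ Icc (0:ℝ) 1) (hv : v ∈ Icc (0:ℝ) 1)
    (hle : u^2+v^2+u^2*v^2 ≤ 1) :
    F ((u*Real.sqrt (1-v^4) + v*Real.sqrt (1-u^4))/(1+u^2*v^2)) = F u + F v := by
  obtain ⟨hu0, hu1⟩ := hu
  obtain ⟨hv0, hv1⟩ := hv
  rcases lt_or_eq_of_le hle with hlt | heq
  · exact core hu0 hv0 hlt
  · by_cases hveq : v = 1
    · subst hveq
      have hueq : u = 0 := by nlinarith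
      subst hueq
      norm_num [Real.sqrt_one, F_zero]
    · by_cases hveq0 : v = 0
      · subst hveq0
        have hueq : u = 1 := by nlinarith
        subst hueq
        norm_num [Real.sqrt_one, F_zero]
      · have hv0' : 0 < v := lt_of_le_of_ne hv0 (Ne.symm hveq0)
        have hv1' : v < 1 := lt_of_le_of_ne hv1 hveq
        have hu0' : 0 < u := by
          rcases eq_or_lt_of_le hu0 with h | h
          · exfalso; rw [← h] at heq; nlinarith
          · exact h
        set B := Real.sqrt (1-v^4) with hBdef
        set ρ : ℝ → ℝ := fun x => (x*B + v*Real.sqrt (1-x^4))/(1+x^2*v^2) with hρdef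
        have heval : ∀ x ∈ Ico (0:ℝ) u, F (ρ x) = F x + F v := by
          rintro x ⟨hx0, hxu⟩
          exact core hx0 hv0 (by nlinarith)
        have hρcont : ContinuousAt ρ u := by
          refine ContinuousAt.div ?_ (by fun_prop) ?_
          · exact ((continuous_id.mul continuous_const).add
              (continuous_const.mul (Real.continuous_sqrt.comp (by continuity)))).continuousAt
          · positivity
        have hρmem : ∀ x ∈ Icc (0:ℝ) u, ρ x ∈ Icc (0:ℝ) 1 := by
          intro x hx
          exact r_mem ⟨hx.1, le_trans hx.2 hu1⟩ ⟨hv0, hv1⟩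
        have h1 : ContinuousWithinAt (fun x => F (ρ x)) (Ico 0 u) u := by
          refine ContinuousWithinAt.comp
            (F_contOn.continuousWithinAt (hρmem u ⟨hu0, le_rfl⟩))
            hρcont.continuousWithinAt ?_
          intro x hx
          exact hρmem x (Ico_subset_Icc_self hx)
        have h2 : ContinuousWithinAt (fun x => F x + F v) (Ico 0 u) u := by
          refine ContinuousWithinAt.add ?_ continuousWithinAt_const
          exact (F_contOn.continuousWithinAt ⟨hu0, hu1⟩).mono
            (fun x hx => ⟨hx.1, le_trans hx.2.le hu1⟩)
        haveI hne : (nhdsWithin u (Ico (0:ℝ) u)).NeBot := by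
          refine mem_closure_iff_nhdsWithin_neBot.mp ?_
          rw [closure_Ico (show (0:ℝ) ≠ u from hu0'.ne)]
          exact ⟨hu0, le_rfl⟩
        have ht1 : Filter.Tendsto (fun x => F (ρ x)) (nhdsWithin u (Ico (0:ℝ) u))
            (nhds (F (ρ u))) := h1.tendsto
        have ht2 : Filter.Tendsto (fun x => F x + F v) (nhdsWithin u (Ico (0:ℝ) u))
            (nhds (F u + F v)) := h2.tendsto
        have heq' : F (ρ u) = F u + F v := by
          refine tendsto_nhds_unique (ht1.congr' ?_) ht2
          exact Filter.eventuallyEq_of_mem self_mem_nhdsWithin heval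
        rw [hρdef] at heq'
        simpa using heq'

lemma compl_eq {x : ℝ} (hx0 : 0 ≤ x) (hx1 : x ≤ 1) :
    F x + F (Real.sqrt ((1-x^2)/(1+x^2))) = F 1 := by
  set c := Real.sqrt ((1-x^2)/(1+x^2)) with hcdef
  have hden : (0:ℝ) < 1 + x^2 := by positivity
  have hfrac0 : 0 ≤ (1-x^2)/(1+x^2) := div_nonneg (by nlinarith) hden.le
  have hc2 : c^2 = (1-x^2)/(1+x^2) := Real.sq_sqrt hfrac0
  have hc0 : 0 ≤ c := Real.sqrt_nonneg _
  have hc1 : c ≤ 1 := by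
    rw [hcdef]
    refine Real.sqrt_le_one.mpr ?_
    rw [div_le_one hden]
    nlinarith
  have hsum : x^2 + c^2 + x^2*c^2 = 1 := by
    rw [hc2]
    field_simp
    ring
  have h := addn ⟨hx0, hx1⟩ ⟨hc0, hc1⟩ (le_of_eq hsum)
  have hB : Real.sqrt (1 - c^4) = 2*x/(1+x^2) := by
    have h4 : 1 - c^4 = (2*x/(1+x^2))^2 := by
      rw [show c^4 = (c^2)^2 by ring, hc2]
      field_simp
      ring
    rw [h4, Real.sqrt_sq (by positivity)]
  have hA : c * Real.sqrt (1-x^4) = 1 - x^2 := by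
    rw [hcdef, ← Real.sqrt_mul hfrac0]
    have h5 : (1-x^2)/(1+x^2)*(1-x^4) = (1-x^2)^2 := by
      field_simp
      ring
    rw [h5, Real.sqrt_sq (by nlinarith)]
  rw [hB, hA] at h
  have hpos : (0:ℝ) < 1 + 2*x^2 - x^4 := by nlinarith
  have h6 : (x*(2*x/(1+x^2)) + (1-x^2))/(1+x^2*c^2) = 1 := by
    rw [hc2]
    rw [div_eq_one_iff_eq (by
      have h7 : 1 + x^2*((1-x^2)/(1+x^2)) = (1+2*x^2-x^4)/(1+x^2) := by
        field_simp
        ring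
      rw [h7]
      exact ne_of_gt (div_pos hpos hden))]
    field_simp
    ring
  rw [h6] at h
  linarith

end EulerLemn

open EulerLemn in
theorem euler_lemniscate_addition (u v r : ℝ)
    (hu : u ∈ Set.Icc (0:ℝ) 1) (hv : v ∈ Set.Icc (0:ℝ) 1)
    (hden : 1 + u ^ 2 * v ^ 2 ≠ 0)
    (hr : r = (u * Real.sqrt (1 - v ^ 4) + v * Real.sqrt (1 - u ^ 4)) /
      (1 + u ^ 2 * v ^ 2))
    (hr0 : 0 ≤ r) (hr1 : r ≤ 1)
    (hF : (∫ t in (0:ℝ)..u, 1 / Real.sqrt (1 - t ^ 4)) +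
          (∫ t in (0:ℝ)..v, 1 / Real.sqrt (1 - t ^ 4)) ≤
          ∫ t in (0:ℝ)..1, 1 / Real.sqrt (1 - t ^ 4)) :
    (∫ t in (0:ℝ)..r, 1 / Real.sqrt (1 - t ^ 4)) =
      (∫ t in (0:ℝ)..u, 1 / Real.sqrt (1 - t ^ 4)) +
      (∫ t in (0:ℝ)..v, 1 / Real.sqrt (1 - t ^ 4)) := by
  obtain ⟨hu0, hu1⟩ := hu
  obtain ⟨hv0, hv1⟩ := hv
  have hF' : F u + F v ≤ F 1 := hF
  show F r = F u + F v
  set c := Real.sqrt ((1-u^2)/(1+u^2)) with hcdef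
  have hcompl : F u + F c = F 1 := compl_eq hu0 hu1
  have hFvc : F v ≤ F c := by linarith
  have hc0 : 0 ≤ c := Real.sqrt_nonneg _
  have hvc : v ≤ c := by
    by_contra h
    push_neg at h
    exact absurd hFvc (not_le.mpr (F_strictMono hc0 h hv1))
  have hc2 : c^2 = (1-u^2)/(1+u^2) := by
    rw [hcdef]
    exact Real.sq_sqrt (div_nonneg (by nlinarith) (by positivity))
  have hle : u^2+v^2+u^2*v^2 ≤ 1 := by
    have hv2 : v^2 ≤ (1-u^2)/(1+u^2) := by
      rw [← hc2]
      exact pow_le_pow_left₀ hv0 hvc 2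
    have h8 := (le_div_iff₀ (by positivity : (0:ℝ) < 1+u^2)).mp hv2
    nlinarith
  rw [hr]
  exact addn ⟨hu0, hu1⟩ ⟨hv0, hv1⟩ hle
end
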